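/- For all integers d ≥ 3 and k ≥ 1, one has Z_d(k)·J_d = J_d·A_d(k)⁻¹, i.e. Z_d(k) = J_d · A_d(k)⁻¹ · J_d⁻¹, where the conjugating matrix J_d does not depend on k. -/
import Mathlib


/-- The matrix `A_d(k)` (over `ℤ`, indices `0, …, d−1`): `A_d(k)_{0,d−2} = k`,
`A_d(k)_{0,d−1} = k−1`, subdiagonal entries `A_d(k)_{i,i−1} = 1` for `1 ≤ i ≤ d−1`,
`A_d(k)_{d−1,d−1} = 1`, and all other entries `0`.  (This is the `1`-indexed matrix of
the paper with `A_d(k)_{1,d−1} = k`, `A_d(k)_{1,d} = k−1`, `A_d(k)_{i+1,i} = 1` for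
`1 ≤ i ≤ d−2`, `A_d(k)_{d,d−1} = A_d(k)_{d,d} = 1`.) -/
def Ad (d : ℕ) (k : ℤ) : Matrix (Fin d) (Fin d) ℤ :=
  Matrix.of fun i j =>
    if i.val = 0 then (if j.val = d - 2 then k else if j.val = d - 1 then k - 1 else 0)
    else (if i.val = j.val + 1 then 1 else 0) +
      (if i.val = d - 1 ∧ j.val = d - 1 then 1 else 0)

/-- The matrix `D_d = I_d + Σ_{j=2}^d E_{1j}`: the identity with first row all ones. -/
def Dd (d : ℕ) : Matrix (Fin d) (Fin d) ℤ :=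
  Matrix.of fun i j => if i.val = 0 then 1 else if i = j then 1 else 0

/-- The matrix `C_d`: `(C_d)_{1,d−1} = 1`, `(C_d)_{i+1,i} = 1` for `1 ≤ i ≤ d−2`,
`(C_d)_{d,d−1} = (C_d)_{d,d} = 1` (1-indexed), all other entries `0`. -/
def Cd (d : ℕ) : Matrix (Fin d) (Fin d) ℤ :=
  Matrix.of fun i j =>
    if i.val = 0 then (if j.val = d - 2 then 1 else 0)
    else (if i.val = j.val + 1 then 1 else 0) +
      (if i.val = d - 1 ∧ j.val = d - 1 then 1 else 0)

/-- The matrix `Z_d(k) = D_d^{k−1} · C_d` of the accelerated induction on lengths. -/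
def Zd (d : ℕ) (k : ℕ) : Matrix (Fin d) (Fin d) ℤ :=
  Dd d ^ (k - 1) * Cd d

/-- The conjugating matrix `J_d`: `(J_d)_{i,d−i} = 1` for `1 ≤ i ≤ d−1` (1-indexed),
last row all `−1`, other entries `0`. -/
def Jd (d : ℕ) : Matrix (Fin d) (Fin d) ℤ :=
  Matrix.of fun i j =>
    if i.val = d - 1 then -1 else if i.val + j.val = d - 2 then 1 else 0


set_option maxHeartbeats 1000000
set_option linter.unreachableTactic false
set_option linter.unusedTactic false

set_option maxHeartbeats 1000000
set_option linter.unreachableTactic false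
set_option linter.unusedTactic false

def Bmat (d : ℕ) (k : ℤ) : Matrix (Fin d) (Fin d) ℤ :=
  Matrix.of fun i j =>
    (if i.val < d - 2 ∧ j.val = i.val + 1 then 1 else 0) +
    (if i.val = d - 2 then (if j.val = 0 then 1 else 0) + (if j.val = d - 1 then 1 - k else 0) else 0) +
    (if i.val = d - 1 then (if j.val = 0 then -1 else 0) + (if j.val = d - 1 then k else 0) else 0)

def Nmat (d : ℕ) : Matrix (Fin d) (Fin d) ℤ :=
  Matrix.of fun i j => if i.val = 0 ∧ j.val ≠ 0 then 1 else 0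

def Wmat (d : ℕ) : Matrix (Fin d) (Fin d) ℤ :=
  Matrix.of fun i _ => if i.val = 0 then 1 else 0

def Qmat (d : ℕ) : Matrix (Fin d) (Fin d) ℤ :=
  Matrix.of fun i j =>
    if i.val = 0 then (if j.val = 0 then 1 else 0)
    else if i.val = d - 1 then (if j.val = 0 then 0 else -1)
    else if i.val + j.val = d - 1 then 1 else 0

def Rmat (d : ℕ) : Matrix (Fin d) (Fin d) ℤ :=
  Matrix.of fun i j => if i.val = 0 ∧ j.val = d - 1 then -1 else 0

def Pmat (d : ℕ) (k : ℤ) : Matrix (Fin d) (Fin d) ℤ :=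
  Matrix.of fun i j =>
    if i.val = 0 then (if j.val = 0 then 1 else 0) + (if j.val = d - 1 then 1 - k else 0)
    else if i.val = d - 1 then (if j.val = 0 then 0 else -1)
    else if i.val + j.val = d - 1 then 1 else 0

lemma sum_single' {d : ℕ} (c : ℕ) (hc : c < d) (f : Fin d → ℤ)
    (h0 : ∀ x : Fin d, x.val ≠ c → f x = 0) : ∑ x, f x = f ⟨c, hc⟩ := by
  rw [Finset.sum_eq_single ⟨c, hc⟩]
  · intro b _ hb
    exact h0 b (by simpa [Fin.ext_iff] using hb)
  · simp

lemma sum_pair' {d : ℕ} (a b : ℕ) (ha : a < d) (hb : b < d) (hab : a ≠ b) (f : Fin d → ℤ)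
    (h0 : ∀ x : Fin d, x.val ≠ a → x.val ≠ b → f x = 0) :
    ∑ x, f x = f ⟨a, ha⟩ + f ⟨b, hb⟩ := by
  have h1 : ∑ x ∈ ({⟨a, ha⟩, ⟨b, hb⟩} : Finset (Fin d)), f x = ∑ x, f x :=
    Finset.sum_subset (Finset.subset_univ _) (fun x _ hx => by
      simp only [Finset.mem_insert, Finset.mem_singleton, not_or, Fin.ext_iff] at hx
      exact h0 x hx.1 hx.2)
  rw [← h1, Finset.sum_pair (by simp [Fin.ext_iff, hab])]

lemma one_entry {d : ℕ} (i j : Fin d) :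
    (1 : Matrix (Fin d) (Fin d) ℤ) i j = if i.val = j.val then 1 else 0 := by
  rw [Matrix.one_apply]; simp [Fin.ext_iff]

lemma colJd (d : ℕ) (hd : 3 ≤ d) (j : Fin d) :
    ∑ x : Fin d, Jd d x j = if j.val = d - 1 then -1 else 0 := by
  have hj' := j.isLt
  rcases eq_or_ne j.val (d - 1) with hj | hj
  · rw [sum_single' (d - 1) (by omega)]
    · simp only [Jd, Matrix.of_apply]
      split_ifs <;> first | omega | ring1 | tauto
    · intro x hx
      have := x.isLt
      simp only [Jd, Matrix.of_apply]
      split_ifs <;> first | omega | ring1 | tauto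
  · rw [sum_pair' (d - 2 - j.val) (d - 1) (by omega) (by omega) (by omega)]
    · simp only [Jd, Matrix.of_apply]
      split_ifs <;> first | omega | ring1 | tauto
    · intro x hx1 hx2
      simp only [Jd, Matrix.of_apply]
      split_ifs <;> first | omega | ring1 | tauto

lemma Jd_mul_Jd (d : ℕ) (hd : 3 ≤ d) : Jd d * Jd d = 1 := by
  ext i j
  rw [Matrix.mul_apply, one_entry]
  have hj' := j.isLt
  have hi' := i.isLt
  rcases eq_or_ne i.val (d - 1) with hi | hi
  · have h1 : ∀ x : Fin d, Jd d i x * Jd d x j = -Jd d x j := by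
      intro x
      have : Jd d i x = -1 := by simp only [Jd, Matrix.of_apply]; rw [if_pos hi]
      rw [this, neg_one_mul]
    rw [Finset.sum_congr rfl (fun x _ => h1 x), Finset.sum_neg_distrib, colJd d hd j]
    split_ifs <;> first | omega | ring1 | tauto
  · rw [sum_single' (d - 2 - i.val) (by omega)]
    · simp only [Jd, Matrix.of_apply]
      split_ifs <;> first | omega | ring1 | tauto
    · intro x hx
      have := x.isLt
      simp only [Jd, Matrix.of_apply]
      split_ifs <;> first | omega | ring1 | tauto

lemma Dd_eq (d : ℕ) : Dd d = 1 + Nmat d := by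
  ext i j
  rw [Matrix.add_apply, one_entry]
  simp only [Dd, Nmat, Matrix.of_apply, Fin.ext_iff]
  split_ifs <;> first | omega | ring1 | tauto

lemma Nmat_sq (d : ℕ) : Nmat d * Nmat d = 0 := by
  ext i j
  rw [Matrix.mul_apply, Matrix.zero_apply]
  apply Finset.sum_eq_zero
  intro x _
  simp only [Nmat, Matrix.of_apply]
  split_ifs <;> first | omega | ring1 | tauto

lemma Dd_pow (d : ℕ) (n : ℕ) : Dd d ^ n = 1 + (n : ℤ) • Nmat d := by
  induction n with
  | zero => simp
  | succ n ih =>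
    rw [pow_succ, ih, Dd_eq, add_mul, one_mul, mul_add, mul_one, smul_mul_assoc, Nmat_sq,
      smul_zero, add_zero]
    have : ((n + 1 : ℕ) : ℤ) = (n : ℤ) + 1 := by push_cast; ring
    rw [this, add_smul, one_smul]
    abel

lemma N_mul_Cd (d : ℕ) (hd : 3 ≤ d) : Nmat d * Cd d = Wmat d := by
  ext i j
  rw [Matrix.mul_apply]
  have hj' := j.isLt
  rcases eq_or_ne i.val 0 with hi | hi
  · rcases eq_or_ne j.val (d - 1) with hj | hj
    · rw [sum_single' (d - 1) (by omega)]
      · simp only [Nmat, Cd, Wmat, Matrix.of_apply, hi]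
        split_ifs <;> first | omega | ring1 | tauto
      · intro x hx
        have := x.isLt
        simp only [Nmat, Cd, Matrix.of_apply, hi]
        split_ifs <;> first | omega | ring1 | tauto
    · rw [sum_single' (j.val + 1) (by omega)]
      · simp only [Nmat, Cd, Wmat, Matrix.of_apply, hi]
        split_ifs <;> first | omega | ring1 | tauto
      · intro x hx
        have := x.isLt
        simp only [Nmat, Cd, Matrix.of_apply, hi]
        split_ifs <;> first | omega | ring1 | tauto
  · have h0 : ∀ x : Fin d, Nmat d i x * Cd d x j = 0 := by
      intro x
      simp only [Nmat, Matrix.of_apply]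
      split_ifs <;> first | omega | ring1 | tauto
    rw [Finset.sum_congr rfl (fun x _ => h0 x), Finset.sum_const_zero]
    simp only [Wmat, Matrix.of_apply]
    split_ifs <;> first | omega | ring1 | tauto

lemma colBmat (d : ℕ) (hd : 3 ≤ d) (k : ℤ) (j : Fin d) :
    ∑ x : Fin d, Bmat d k x j = if j.val = 0 then 0 else 1 := by
  have hj' := j.isLt
  rcases eq_or_ne j.val 0 with hj | hj
  · rw [sum_pair' (d - 2) (d - 1) (by omega) (by omega) (by omega)]
    · simp only [Bmat, Matrix.of_apply]
      split_ifs <;> first | omega | ring1 | tauto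
    · intro x hx1 hx2
      have := x.isLt
      simp only [Bmat, Matrix.of_apply]
      split_ifs <;> first | omega | ring1 | tauto
  · rcases eq_or_ne j.val (d - 1) with hj2 | hj2
    · rw [sum_pair' (d - 2) (d - 1) (by omega) (by omega) (by omega)]
      · simp only [Bmat, Matrix.of_apply]
        split_ifs <;> first | omega | ring1 | tauto
      · intro x hx1 hx2
        have := x.isLt
        simp only [Bmat, Matrix.of_apply]
        split_ifs <;> first | omega | ring1 | tauto
    · rw [sum_single' (j.val - 1) (by omega)]
      · simp only [Bmat, Matrix.of_apply]
        split_ifs <;> first | omega | ring1 | tauto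
      · intro x hx
        have := x.isLt
        simp only [Bmat, Matrix.of_apply]
        split_ifs <;> first | omega | ring1 | tauto

lemma Cd_mul_Jd (d : ℕ) (hd : 3 ≤ d) : Cd d * Jd d = Qmat d := by
  ext i j
  rw [Matrix.mul_apply]
  have hj' := j.isLt
  have hi' := i.isLt
  rcases eq_or_ne i.val 0 with hi | hi
  · rw [sum_single' (d - 2) (by omega)]
    · simp only [Cd, Jd, Qmat, Matrix.of_apply, hi]
      split_ifs <;> first | omega | ring1 | tauto
    · intro x hx
      have := x.isLt
      simp only [Cd, Jd, Matrix.of_apply, hi]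
      split_ifs <;> first | omega | ring1 | tauto
  · rcases eq_or_ne i.val (d - 1) with hm | hm
    · rw [sum_pair' (d - 2) (d - 1) (by omega) (by omega) (by omega)]
      · simp only [Cd, Jd, Qmat, Matrix.of_apply, hi]
        split_ifs <;> first | omega | ring1 | tauto
      · intro x hx1 hx2
        have := x.isLt
        simp only [Cd, Jd, Matrix.of_apply, hi]
        split_ifs <;> first | omega | ring1 | tauto
    · rw [sum_single' (i.val - 1) (by omega)]
      · simp only [Cd, Jd, Qmat, Matrix.of_apply, hi]
        split_ifs <;> first | omega | ring1 | tauto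
      · intro x hx
        have := x.isLt
        simp only [Cd, Jd, Matrix.of_apply, hi]
        split_ifs <;> first | omega | ring1 | tauto

lemma W_mul_Jd (d : ℕ) (hd : 3 ≤ d) : Wmat d * Jd d = Rmat d := by
  ext i j
  rw [Matrix.mul_apply]
  rcases eq_or_ne i.val 0 with hi | hi
  · have h1 : ∀ x : Fin d, Wmat d i x * Jd d x j = Jd d x j := by
      intro x
      have : Wmat d i x = 1 := by simp only [Wmat, Matrix.of_apply]; rw [if_pos hi]
      rw [this, one_mul]
    rw [Finset.sum_congr rfl (fun x _ => h1 x), colJd d hd j]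
    simp only [Rmat, Matrix.of_apply]
    split_ifs <;> first | omega | ring1 | tauto
  · have h0 : ∀ x : Fin d, Wmat d i x * Jd d x j = 0 := by
      intro x
      simp only [Wmat, Matrix.of_apply]
      split_ifs <;> first | omega | ring1 | tauto
    rw [Finset.sum_congr rfl (fun x _ => h0 x), Finset.sum_const_zero]
    simp only [Rmat, Matrix.of_apply]
    split_ifs <;> first | omega | ring1 | tauto

lemma Jd_mul_Bmat (d : ℕ) (hd : 3 ≤ d) (k : ℤ) : Jd d * Bmat d k = Pmat d k := by
  ext i j
  rw [Matrix.mul_apply]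
  have hj' := j.isLt
  have hi' := i.isLt
  rcases eq_or_ne i.val (d - 1) with hi | hi
  · have h1 : ∀ x : Fin d, Jd d i x * Bmat d k x j = -Bmat d k x j := by
      intro x
      have : Jd d i x = -1 := by simp only [Jd, Matrix.of_apply]; rw [if_pos hi]
      rw [this, neg_one_mul]
    rw [Finset.sum_congr rfl (fun x _ => h1 x), Finset.sum_neg_distrib, colBmat d hd k j]
    simp only [Pmat, Matrix.of_apply]
    split_ifs <;> first | omega | ring1 | tauto
  · rw [sum_single' (d - 2 - i.val) (by omega)]
    · simp only [Jd, Bmat, Pmat, Matrix.of_apply]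
      split_ifs <;> first | omega | ring1 | tauto
    · intro x hx
      have := x.isLt
      simp only [Jd, Bmat, Matrix.of_apply]
      split_ifs <;> first | omega | ring1 | tauto

lemma Q_add_R (d : ℕ) (hd : 3 ≤ d) (k : ℤ) : Qmat d + (k - 1) • Rmat d = Pmat d k := by
  ext i j
  simp only [Matrix.add_apply, Matrix.smul_apply, smul_eq_mul, Qmat, Rmat, Pmat, Matrix.of_apply]
  split_ifs <;> first | omega | ring1 | tauto

lemma Ad_mul_Bmat (d : ℕ) (hd : 3 ≤ d) (k : ℤ) : Ad d k * Bmat d k = 1 := by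
  ext i j
  rw [Matrix.mul_apply, one_entry]
  rcases eq_or_ne i.val 0 with hi | hi
  · rw [sum_pair' (d - 2) (d - 1) (by omega) (by omega) (by omega)]
    · simp only [Ad, Bmat, Matrix.of_apply, hi, if_pos rfl]
      split_ifs <;> first | omega | ring1 | tauto
    · intro x hx1 hx2
      simp only [Ad, Bmat, Matrix.of_apply, hi, if_pos rfl]
      split_ifs <;> first | omega | ring1 | tauto
  · rcases eq_or_ne i.val (d - 1) with hm | hm
    · rw [sum_pair' (d - 2) (d - 1) (by omega) (by omega) (by omega)]
      · simp only [Ad, Bmat, Matrix.of_apply, hi, hm]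
        split_ifs <;> first | omega | ring1 | tauto
      · intro x hx1 hx2
        simp only [Ad, Bmat, Matrix.of_apply, hi, hm]
        split_ifs <;> first | omega | ring1 | tauto
    · have hi1 : i.val - 1 < d := by omega
      rw [sum_single' (i.val - 1) hi1]
      · simp only [Ad, Bmat, Matrix.of_apply, hi]
        have := i.isLt
        split_ifs <;> first | omega | ring1 | tauto
      · intro x hx
        simp only [Ad, Bmat, Matrix.of_apply, hi]
        split_ifs <;> first | omega | ring1 | tauto

lemma Zd_mul_Jd (d : ℕ) (hd : 3 ≤ d) (k : ℕ) (hk : 1 ≤ k) :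
    Zd d k * Jd d = Pmat d (k : ℤ) := by
  rw [Zd, Dd_pow d (k - 1), add_mul, one_mul, smul_mul_assoc, N_mul_Cd d hd, add_mul,
    smul_mul_assoc, W_mul_Jd d hd, Cd_mul_Jd d hd, Nat.cast_sub hk, Nat.cast_one, Q_add_R d hd]


/-- For all `d ≥ 3` and `k ≥ 1`, `Z_d(k)·J_d = J_d·A_d(k)⁻¹`, i.e.
`Z_d(k) = J_d · A_d(k)⁻¹ · J_d⁻¹`, the conjugating matrix `J_d` being independent of `k`. -/
theorem Zd_conjugate_Ad_inv (d : ℕ) (hd : 3 ≤ d) (k : ℕ) (hk : 1 ≤ k) :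
    Zd d k * Jd d = Jd d * (Ad d (k : ℤ))⁻¹ ∧
    Zd d k = Jd d * (Ad d (k : ℤ))⁻¹ * (Jd d)⁻¹ := by
  have hB : (Ad d (k : ℤ))⁻¹ = Bmat d (k : ℤ) := Matrix.inv_eq_right_inv (Ad_mul_Bmat d hd _)
  have hJ : (Jd d)⁻¹ = Jd d := Matrix.inv_eq_right_inv (Jd_mul_Jd d hd)
  have h1 : Zd d k * Jd d = Jd d * Bmat d (k : ℤ) := by
    rw [Zd_mul_Jd d hd k hk, Jd_mul_Bmat d hd]
  refine ⟨by rw [hB]; exact h1, ?_⟩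
  rw [hB, hJ, ← h1, Matrix.mul_assoc, Jd_mul_Jd d hd, Matrix.mul_one]
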